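/- arXiv:2209.14838 — 2 statements merged into one kernel-verified Lean document; each statement's English description precedes it below -/
import Mathlib

section
/- With G ≺ H, 𝒜, ℬ and A ↦ A^# as in the combinatorial set-up, an ultrafilter q ∈ S(ℬ) is a weak heir over 𝒜 if and only if r(s*q) = r(s)*r(q) for every s ∈ S(ℬ), where r : S(ℬ) → S(𝒜) is the restriction map and * is the semigroup operation on ultrafilters defined via the d-maps. -/
open Set

/-- Left translate of a set: $hA = \{h·a : a ∈ A\}$. -/
def trL {H : Type*} [Group H] (h : H) (A : Set H) : Set H := (fun x => h * x) '' A

/-- A Boolean algebra of subsets of $T ⊆ H$ closed under left translation by elements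
of $T$ (complements are taken relative to $T$). -/
def IsAlgOn {H : Type*} [Group H] (T : Set H) (𝒜 : Set (Set H)) : Prop :=
  (∀ A ∈ 𝒜, A ⊆ T) ∧ ∅ ∈ 𝒜 ∧ T ∈ 𝒜 ∧ (∀ A ∈ 𝒜, T \ A ∈ 𝒜) ∧
    (∀ A ∈ 𝒜, ∀ B ∈ 𝒜, A ∪ B ∈ 𝒜) ∧ ∀ g ∈ T, ∀ A ∈ 𝒜, trL g A ∈ 𝒜

/-- An ultrafilter on the algebra 𝒜 of subsets of $T$. -/
def IsUltraOn {H : Type*} [Group H] (T : Set H) (𝒜 p : Set (Set H)) : Prop :=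
  p ⊆ 𝒜 ∧ ∅ ∉ p ∧ T ∈ p ∧ (∀ A ∈ p, ∀ B ∈ p, A ∩ B ∈ p) ∧
    (∀ A ∈ p, ∀ B ∈ 𝒜, A ⊆ B → B ∈ p) ∧ ∀ A ∈ 𝒜, A ∈ p ∨ T \ A ∈ p

/-- The map $d_p(A) = \{g ∈ T : g⁻¹A ∈ p\}$. -/
def dmap {H : Type*} [Group H] (T : Set H) (p : Set (Set H)) (A : Set H) : Set H :=
  {g : H | g ∈ T ∧ trL g⁻¹ A ∈ p}

/-- 𝒜 is d-closed. -/
def DClosedOn {H : Type*} [Group H] (T : Set H) (𝒜 : Set (Set H)) : Prop :=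
  ∀ p : Set (Set H), IsUltraOn T 𝒜 p → ∀ A ∈ 𝒜, dmap T p A ∈ 𝒜

/-- The semigroup operation on ultrafilters: $A ∈ p*q$ iff $A ∈ 𝒜$ and $d_q(A) ∈ p$. -/
def ustar {H : Type*} [Group H] (T : Set H) (𝒜 p q : Set (Set H)) : Set (Set H) :=
  {A | A ∈ 𝒜 ∧ dmap T q A ∈ p}

/-- The combinatorial set-up: $G ≺ H$ groups, 𝒜 a d-closed $G$-algebra of subsets of
$G$, ℬ a d-closed $H$-algebra of subsets of $H$, and a Boolean monomorphism
$A ↦ A^\#$ from 𝒜 to ℬ respecting left translation by elements of $G$, with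
$A^\# ∩ G = A$ and $ℬ|_G = 𝒜$.  The field `elem` records the combinatorial content
of the elementarity $G ≺ H$: a set of 𝒜 whose $\#$-extension is nonempty is
itself nonempty. -/
structure CombSetup (H : Type*) [Group H] where
  G : Subgroup H
  𝒜 : Set (Set H)
  ℬ : Set (Set H)
  sharp : Set H → Set H
  alg𝒜 : IsAlgOn (G : Set H) 𝒜
  algℬ : IsAlgOn (univ : Set H) ℬ
  dclosed𝒜 : DClosedOn (G : Set H) 𝒜
  dclosedℬ : DClosedOn (univ : Set H) ℬ
  sharp_mem : ∀ A ∈ 𝒜, sharp A ∈ ℬ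
  sharp_inter : ∀ A ∈ 𝒜, sharp A ∩ (G : Set H) = A
  sharp_empty : sharp ∅ = ∅
  sharp_union : ∀ A ∈ 𝒜, ∀ B ∈ 𝒜, sharp (A ∪ B) = sharp A ∪ sharp B
  sharp_compl : ∀ A ∈ 𝒜, sharp ((G : Set H) \ A) = (sharp A)ᶜ
  sharp_trans : ∀ g ∈ G, ∀ A ∈ 𝒜, sharp (trL g A) = trL g (sharp A)
  restrict_mem : ∀ B ∈ ℬ, B ∩ (G : Set H) ∈ 𝒜
  elem : ∀ A ∈ 𝒜, (sharp A).Nonempty → A.Nonempty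

variable {H : Type*} [Group H]

/-- The restriction map $r : S(ℬ) → S(𝒜)$, $r(q) = \{A ∈ 𝒜 : A^\# ∈ q\}$. -/
def CombSetup.res (C : CombSetup H) (q : Set (Set H)) : Set (Set H) :=
  {A | A ∈ C.𝒜 ∧ C.sharp A ∈ q}

/-- $q ∈ S(ℬ)$ is a weak heir of $p ∈ S(𝒜)$: $d_q(A^\#) = (d_p A)^\#$ for all $A ∈ 𝒜$. -/
def CombSetup.IsWeakHeir (C : CombSetup H) (q p : Set (Set H)) : Prop :=
  IsUltraOn (univ : Set H) C.ℬ q ∧ IsUltraOn (C.G : Set H) C.𝒜 p ∧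
    ∀ A ∈ C.𝒜, dmap (univ : Set H) q (C.sharp A) = C.sharp (dmap (C.G : Set H) p A)

/-- $q ∈ S(ℬ)$ is a weak coheir of $p ∈ S(𝒜)$: for every $A ∈ 𝒜$ and $s ∈ S(ℬ)$,
$d_s(A^\#) ∈ q ↔ d_s(A^\#) ∩ G ∈ p$. -/
def CombSetup.IsWeakCoheir (C : CombSetup H) (q p : Set (Set H)) : Prop :=
  IsUltraOn (univ : Set H) C.ℬ q ∧ IsUltraOn (C.G : Set H) C.𝒜 p ∧
    ∀ A ∈ C.𝒜, ∀ s : Set (Set H), IsUltraOn (univ : Set H) C.ℬ s →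
      (dmap (univ : Set H) s (C.sharp A) ∈ q ↔
        dmap (univ : Set H) s (C.sharp A) ∩ (C.G : Set H) ∈ p)

/-- The coheir extension $p^ℬ = \{B ∈ ℬ : B ∩ G ∈ p\}$. -/
def CombSetup.coheirExt (C : CombSetup H) (p : Set (Set H)) : Set (Set H) :=
  {B | B ∈ C.ℬ ∧ B ∩ (C.G : Set H) ∈ p}

/-- $q ∈ S(ℬ)$ is a coheir over 𝒜: every set in $q$ meets $G$. -/
def CombSetup.IsCoheir (C : CombSetup H) (q : Set (Set H)) : Prop :=
  IsUltraOn (univ : Set H) C.ℬ q ∧ ∀ B ∈ q, (B ∩ (C.G : Set H)).Nonempty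

lemma alg_diff_union_eq {T A B : Set H} (hA : A ⊆ T) (hB : B ⊆ T) :
    T \ ((T \ A) ∪ (T \ B)) = A ∩ B := by
  ext x
  simp only [Set.mem_diff, Set.mem_union, Set.mem_inter_iff]
  have h1 := @hA x
  have h2 := @hB x
  tauto

lemma alg_inter {T : Set H} {𝒜 : Set (Set H)} (h : IsAlgOn T 𝒜)
    {A B : Set H} (hA : A ∈ 𝒜) (hB : B ∈ 𝒜) : A ∩ B ∈ 𝒜 := by
  obtain ⟨hsub, -, -, hdiff, hun, -⟩ := h
  rw [← alg_diff_union_eq (hsub A hA) (hsub B hB)]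
  exact hdiff _ (hun _ (hdiff _ hA) _ (hdiff _ hB))

lemma CombSetup.sharp_inter' (C : CombSetup H) {A B : Set H}
    (hA : A ∈ C.𝒜) (hB : B ∈ C.𝒜) : C.sharp (A ∩ B) = C.sharp A ∩ C.sharp B := by
  obtain ⟨hsub, -, -, hdiff, hun, -⟩ := C.alg𝒜
  have key : A ∩ B = (C.G : Set H) \ (((C.G : Set H) \ A) ∪ ((C.G : Set H) \ B)) :=
    (alg_diff_union_eq (hsub A hA) (hsub B hB)).symm
  rw [key, C.sharp_compl _ (hun _ (hdiff _ hA) _ (hdiff _ hB)),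
    C.sharp_union _ (hdiff _ hA) _ (hdiff _ hB),
    C.sharp_compl _ hA, C.sharp_compl _ hB, Set.compl_union, compl_compl, compl_compl]

lemma CombSetup.sharp_G (C : CombSetup H) : C.sharp (C.G : Set H) = Set.univ := by
  have h0 : (∅ : Set H) ∈ C.𝒜 := C.alg𝒜.2.1
  have := C.sharp_compl _ h0
  rw [Set.diff_empty] at this
  rw [this, C.sharp_empty, Set.compl_empty]

lemma CombSetup.res_ultra (C : CombSetup H) {q : Set (Set H)}
    (hq : IsUltraOn (univ : Set H) C.ℬ q) :
    IsUltraOn (C.G : Set H) C.𝒜 (C.res q) := by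
  obtain ⟨hqsub, hqne, hquniv, hqint, hqup, hqdec⟩ := hq
  refine ⟨fun A hA => hA.1, ?_, ?_, ?_, ?_, ?_⟩
  · intro h
    have h2 : C.sharp ∅ ∈ q := h.2
    rw [C.sharp_empty] at h2
    exact hqne h2
  · exact ⟨C.alg𝒜.2.2.1, by rw [C.sharp_G]; exact hquniv⟩
  · intro A hA B hB
    refine ⟨alg_inter C.alg𝒜 hA.1 hB.1, ?_⟩
    rw [C.sharp_inter' hA.1 hB.1]
    exact hqint _ hA.2 _ hB.2
  · intro A hA B hB hAB
    refine ⟨hB, ?_⟩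
    have hsub : C.sharp A ⊆ C.sharp B := by
      have : A ∩ B = A := Set.inter_eq_self_of_subset_left hAB
      have h2 := C.sharp_inter' hA.1 hB
      rw [this] at h2
      rw [h2]
      exact Set.inter_subset_right
    exact hqup _ hA.2 _ (C.sharp_mem _ hB) hsub
  · intro A hA
    rcases hqdec _ (C.sharp_mem _ hA) with h | h
    · exact Or.inl ⟨hA, h⟩
    · refine Or.inr ⟨C.alg𝒜.2.2.2.1 _ hA, ?_⟩
      rw [C.sharp_compl _ hA]
      rwa [← Set.compl_eq_univ_diff] at h

/-- The principal ultrafilter at $h$ on ℬ. -/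
lemma principal_ultra {ℬ : Set (Set H)} (halg : IsAlgOn (univ : Set H) ℬ) (h : H) :
    IsUltraOn (univ : Set H) ℬ {B | B ∈ ℬ ∧ h ∈ B} := by
  refine ⟨fun B hB => hB.1, fun hc => hc.2, ⟨halg.2.2.1, trivial⟩, ?_, ?_, ?_⟩
  · intro A hA B hB
    exact ⟨alg_inter halg hA.1 hB.1, hA.2, hB.2⟩
  · intro A hA B hB hAB
    exact ⟨hB, hAB hA.2⟩
  · intro A hA
    by_cases hh : h ∈ A
    · exact Or.inl ⟨hA, hh⟩
    · exact Or.inr ⟨halg.2.2.2.1 _ hA, trivial, hh⟩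

/-- $q ∈ S(ℬ)$ is a weak heir over 𝒜 iff $r(s*q) = r(s)*r(q)$ for every $s ∈ S(ℬ)$. -/
theorem weakHeir_iff_res_mul (C : CombSetup H) (q : Set (Set H))
    (hq : IsUltraOn (univ : Set H) C.ℬ q) :
    C.IsWeakHeir q (C.res q) ↔
      ∀ s : Set (Set H), IsUltraOn (univ : Set H) C.ℬ s →
        C.res (ustar (univ : Set H) C.ℬ s q) =
          ustar (C.G : Set H) C.𝒜 (C.res s) (C.res q) := by
  have hr : IsUltraOn (C.G : Set H) C.𝒜 (C.res q) := C.res_ultra hq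
  constructor
  · rintro ⟨-, -, heq⟩ s hs
    simp only [CombSetup.res] at heq
    ext A
    simp only [CombSetup.res, ustar, Set.mem_setOf_eq]
    constructor
    · rintro ⟨hA, -, hd⟩
      refine ⟨hA, C.dclosed𝒜 _ hr _ hA, ?_⟩
      rwa [← heq _ hA]
    · rintro ⟨hA, -, hd⟩
      exact ⟨hA, C.sharp_mem _ hA, by rwa [heq _ hA]⟩
  · intro hyp
    refine ⟨hq, hr, fun A hA => ?_⟩
    ext h
    simp only [CombSetup.res]
    have hkey := Set.ext_iff.mp (hyp _ (principal_ultra C.algℬ h)) A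
    simp only [CombSetup.res, ustar, Set.mem_setOf_eq] at hkey
    have hBmem : dmap (univ : Set H) q (C.sharp A) ∈ C.ℬ :=
      C.dclosedℬ _ hq _ (C.sharp_mem _ hA)
    have hAmem : dmap (C.G : Set H) (C.res q) A ∈ C.𝒜 :=
      C.dclosed𝒜 _ hr _ hA
    constructor
    · intro hh
      exact (hkey.mp ⟨hA, C.sharp_mem _ hA, hBmem, hh⟩).2.2.2
    · intro hh
      exact (hkey.mpr ⟨hA, hAmem, C.sharp_mem _ hAmem, hh⟩).2.2.2
end

section
/- With G ≺ H, 𝒜, ℬ as in the combinatorial set-up, suppose every minimal left ideal of S(ℬ) is a group. Then every minimal left ideal of S(𝒜) is a group. -/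
open Set

variable {H : Type*} [Group H]

/-- A left ideal of the semigroup of ultrafilters on the algebra 𝒜 of subsets of $T$:
a nonempty set of ultrafilters closed under $p * (-)$ for all ultrafilters $p$. -/
def IsLeftIdealU {H : Type*} [Group H] (T : Set H) (𝒜 : Set (Set H))
    (I : Set (Set (Set H))) : Prop :=
  I.Nonempty ∧ (∀ q ∈ I, IsUltraOn T 𝒜 q) ∧
    ∀ p : Set (Set H), IsUltraOn T 𝒜 p → ∀ q ∈ I, ustar T 𝒜 p q ∈ I

/-- A minimal left ideal of the semigroup of ultrafilters. -/
def IsMinLeftIdealU {H : Type*} [Group H] (T : Set H) (𝒜 : Set (Set H))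
    (I : Set (Set (Set H))) : Prop :=
  IsLeftIdealU T 𝒜 I ∧ ∀ J ⊆ I, IsLeftIdealU T 𝒜 J → J = I

/-- A set of ultrafilters that is a group under $*$. -/
def IsGroupU {H : Type*} [Group H] (T : Set H) (𝒜 : Set (Set H))
    (I : Set (Set (Set H))) : Prop :=
  (∀ p ∈ I, ∀ q ∈ I, ustar T 𝒜 p q ∈ I) ∧
    ∃ u ∈ I, (∀ p ∈ I, ustar T 𝒜 u p = p ∧ ustar T 𝒜 p u = p) ∧
      ∀ p ∈ I, ∃ q ∈ I, ustar T 𝒜 p q = u ∧ ustar T 𝒜 q p = u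

set_option linter.unusedSectionVars false
set_option linter.unusedVariables false

section AuxLib

variable {H : Type*} [Group H]

lemma aux_mem_trL {g x : H} {A : Set H} : x ∈ trL g A ↔ g⁻¹ * x ∈ A := by
  constructor
  · rintro ⟨a, ha, rfl⟩; simpa using ha
  · intro h; exact ⟨g⁻¹ * x, h, by simp⟩

lemma aux_trL_trL (g h : H) (A : Set H) : trL g (trL h A) = trL (g * h) A := by
  ext x; simp [aux_mem_trL, mul_inv_rev, mul_assoc]

lemma aux_trL_one (A : Set H) : trL 1 A = A := by
  ext x; simp [aux_mem_trL]

lemma aux_trL_inter (g : H) (A B : Set H) : trL g (A ∩ B) = trL g A ∩ trL g B := by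
  ext x; simp [aux_mem_trL, Set.mem_inter_iff]

lemma aux_trL_empty (g : H) : trL g (∅ : Set H) = ∅ := by
  ext x; simp [aux_mem_trL]

lemma aux_trL_mono (g : H) {A B : Set H} (h : A ⊆ B) : trL g A ⊆ trL g B := by
  intro x hx; rw [aux_mem_trL] at hx ⊢; exact h hx

/-- `T` is a subgroup-like subset. -/
def gT (T : Set H) : Prop :=
  (1 : H) ∈ T ∧ (∀ a ∈ T, a⁻¹ ∈ T) ∧ ∀ a ∈ T, ∀ b ∈ T, a * b ∈ T

lemma gT_univ : gT (Set.univ : Set H) :=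
  ⟨Set.mem_univ _, fun _ _ => Set.mem_univ _, fun _ _ _ _ => Set.mem_univ _⟩

lemma gT_subgroup (G : Subgroup H) : gT (G : Set H) :=
  ⟨G.one_mem, fun _ ha => inv_mem ha, fun _ ha _ hb => mul_mem ha hb⟩

lemma aux_memT {T : Set H} (hT : gT T) {g : H} (hg : g ∈ T) (x : H) :
    g⁻¹ * x ∈ T ↔ x ∈ T := by
  constructor
  · intro h
    have := hT.2.2 _ hg _ h
    simpa using this
  · intro h; exact hT.2.2 _ (hT.2.1 _ hg) _ h

lemma aux_trL_T {T : Set H} (hT : gT T) {g : H} (hg : g ∈ T) : trL g T = T := by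
  ext x; rw [aux_mem_trL]; exact aux_memT hT hg x

lemma aux_trL_diff {T : Set H} (hT : gT T) {g : H} (hg : g ∈ T) (A : Set H) :
    trL g (T \ A) = T \ trL g A := by
  ext x
  simp only [aux_mem_trL, Set.mem_diff]
  rw [aux_memT hT hg]

section TA
variable {T : Set H} {𝒜 : Set (Set H)}

lemma aux_inter_eqT {A B : Set H} (hA : A ⊆ T) :
    A ∩ B = T \ ((T \ A) ∪ (T \ B)) := by
  ext x
  constructor
  · rintro ⟨ha, hb⟩
    exact ⟨hA ha, by simp [ha, hb]⟩
  · rintro ⟨hxT, hx⟩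
    simp only [Set.mem_union, Set.mem_diff, not_or, not_and, not_not] at hx
    exact ⟨hx.1 hxT, hx.2 hxT⟩

lemma aux_inter_mem𝒜 (hA : IsAlgOn T 𝒜) {A B : Set H} (h1 : A ∈ 𝒜) (h2 : B ∈ 𝒜) :
    A ∩ B ∈ 𝒜 := by
  rw [aux_inter_eqT (hA.1 A h1)]
  exact hA.2.2.2.1 _ (hA.2.2.2.2.1 _ (hA.2.2.2.1 A h1) _ (hA.2.2.2.1 B h2))

lemma aux_nonempty_of_mem {p : Set (Set H)} (hp : IsUltraOn T 𝒜 p) {A : Set H}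
    (h : A ∈ p) : A.Nonempty := by
  rcases Set.eq_empty_or_nonempty A with rfl | h'
  · exact absurd h hp.2.1
  · exact h'

lemma aux_not_both {p : Set (Set H)} (hp : IsUltraOn T 𝒜 p) {A : Set H}
    (h1 : A ∈ p) (h2 : T \ A ∈ p) : False := by
  have h3 : A ∩ (T \ A) = ∅ := by ext x; simp only [Set.mem_inter_iff, Set.mem_diff]; tauto
  have := hp.2.2.2.1 A h1 _ h2
  rw [h3] at this
  exact hp.2.1 this

lemma aux_compl_mem {p : Set (Set H)} (hp : IsUltraOn T 𝒜 p) {A : Set H}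
    (hA : A ∈ 𝒜) (h : A ∉ p) : T \ A ∈ p := by
  rcases hp.2.2.2.2.2 A hA with h' | h'
  · exact absurd h' h
  · exact h'

lemma aux_ultra_eq_of_subset {p q : Set (Set H)} (hp : IsUltraOn T 𝒜 p)
    (hq : IsUltraOn T 𝒜 q) (h : p ⊆ q) : p = q := by
  apply Set.Subset.antisymm h
  intro A hAq
  by_contra hAp
  exact aux_not_both hq hAq (h (aux_compl_mem hp (hq.1 hAq) hAp))

lemma aux_dmap_subT {p : Set (Set H)} {A : Set H} : dmap T p A ⊆ T := fun _ hg => hg.1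

lemma aux_dmap_empty {p : Set (Set H)} (hp : IsUltraOn T 𝒜 p) : dmap T p (∅ : Set H) = ∅ := by
  ext g
  simp only [dmap, Set.mem_setOf_eq, aux_trL_empty, Set.mem_empty_iff_false, iff_false, not_and]
  exact fun _ => hp.2.1

lemma aux_dmap_T (hT : gT T) {p : Set (Set H)} (hp : IsUltraOn T 𝒜 p) : dmap T p T = T := by
  ext g
  constructor
  · exact fun h => h.1
  · intro hg
    exact ⟨hg, by rw [aux_trL_T hT (hT.2.1 _ hg)]; exact hp.2.2.1⟩

lemma aux_dmap_mono (hT : gT T) (hA : IsAlgOn T 𝒜) {q : Set (Set H)} (hq : IsUltraOn T 𝒜 q)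
    {A B : Set H} (hAB : A ⊆ B) (hB : B ∈ 𝒜) : dmap T q A ⊆ dmap T q B := by
  rintro g ⟨hgT, h⟩
  exact ⟨hgT, hq.2.2.2.2.1 _ h _ (hA.2.2.2.2.2 g⁻¹ (hT.2.1 _ hgT) B hB) (aux_trL_mono _ hAB)⟩

lemma aux_dmap_inter (hA : IsAlgOn T 𝒜) {q : Set (Set H)} (hq : IsUltraOn T 𝒜 q)
    {A B : Set H} (hA1 : A ∈ 𝒜) (hB1 : B ∈ 𝒜) (hT : gT T) :
    dmap T q (A ∩ B) = dmap T q A ∩ dmap T q B := by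
  ext g
  constructor
  · rintro ⟨hgT, h⟩
    rw [aux_trL_inter] at h
    have hAg : trL g⁻¹ A ∈ 𝒜 := hA.2.2.2.2.2 g⁻¹ (hT.2.1 _ hgT) A hA1
    have hBg : trL g⁻¹ B ∈ 𝒜 := hA.2.2.2.2.2 g⁻¹ (hT.2.1 _ hgT) B hB1
    exact ⟨⟨hgT, hq.2.2.2.2.1 _ h _ hAg Set.inter_subset_left⟩,
           ⟨hgT, hq.2.2.2.2.1 _ h _ hBg Set.inter_subset_right⟩⟩
  · rintro ⟨⟨hgT, h1⟩, ⟨-, h2⟩⟩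
    exact ⟨hgT, by rw [aux_trL_inter]; exact hq.2.2.2.1 _ h1 _ h2⟩

lemma aux_dmap_compl (hT : gT T) (hA : IsAlgOn T 𝒜) {q : Set (Set H)}
    (hq : IsUltraOn T 𝒜 q) {A : Set H} (hA1 : A ∈ 𝒜) :
    dmap T q (T \ A) = T \ dmap T q A := by
  ext g
  constructor
  · rintro ⟨hgT, h⟩
    rw [aux_trL_diff hT (hT.2.1 _ hgT)] at h
    refine ⟨hgT, fun hmem => ?_⟩
    exact aux_not_both hq hmem.2 h
  · rintro ⟨hgT, h⟩
    have h2 : trL g⁻¹ A ∉ q := fun hc => h ⟨hgT, hc⟩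
    have h3 : trL g⁻¹ A ∈ 𝒜 := hA.2.2.2.2.2 g⁻¹ (hT.2.1 _ hgT) A hA1
    exact ⟨hgT, by rw [aux_trL_diff hT (hT.2.1 _ hgT)]; exact aux_compl_mem hq h3 h2⟩

lemma aux_dmap_trL (hT : gT T) {q : Set (Set H)} {g : H} (hg : g ∈ T) (A : Set H) :
    dmap T q (trL g A) = trL g (dmap T q A) := by
  ext h
  have h1 : trL h⁻¹ (trL g A) = trL (h⁻¹ * g) A := aux_trL_trL _ _ _
  have h2 : trL (g⁻¹ * h)⁻¹ A = trL (h⁻¹ * g) A := by rw [mul_inv_rev, inv_inv]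
  constructor
  · rintro ⟨hhT, hq'⟩
    rw [aux_mem_trL]
    exact ⟨(aux_memT hT hg h).2 hhT, by rw [h2, ← h1]; exact hq'⟩
  · intro hmem
    rw [aux_mem_trL] at hmem
    obtain ⟨hT', hq'⟩ := hmem
    exact ⟨(aux_memT hT hg h).1 hT', by rw [h1, ← h2]; exact hq'⟩

lemma aux_mem_ustar {p q : Set (Set H)} {A : Set H} :
    A ∈ ustar T 𝒜 p q ↔ A ∈ 𝒜 ∧ dmap T q A ∈ p := Iff.rfl

lemma aux_ustar_ultra (hT : gT T) (hA : IsAlgOn T 𝒜) (hD : DClosedOn T 𝒜)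
    {p q : Set (Set H)} (hp : IsUltraOn T 𝒜 p) (hq : IsUltraOn T 𝒜 q) :
    IsUltraOn T 𝒜 (ustar T 𝒜 p q) := by
  refine ⟨fun A hA' => hA'.1, ?_, ?_, ?_, ?_, ?_⟩
  · intro h
    rw [aux_mem_ustar, aux_dmap_empty hq] at h
    exact hp.2.1 h.2
  · exact ⟨hA.2.2.1, by rw [aux_dmap_T hT hq]; exact hp.2.2.1⟩
  · intro A hA' B hB'
    exact ⟨aux_inter_mem𝒜 hA hA'.1 hB'.1,
      by rw [aux_dmap_inter hA hq hA'.1 hB'.1 hT]; exact hp.2.2.2.1 _ hA'.2 _ hB'.2⟩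
  · intro A hA' B hB𝒜 hsub
    exact ⟨hB𝒜, hp.2.2.2.2.1 _ hA'.2 _ (hD q hq B hB𝒜) (aux_dmap_mono hT hA hq hsub hB𝒜)⟩
  · intro A hA𝒜
    rcases hp.2.2.2.2.2 (dmap T q A) (hD q hq A hA𝒜) with h | h
    · exact Or.inl ⟨hA𝒜, h⟩
    · exact Or.inr ⟨hA.2.2.2.1 A hA𝒜, by rw [aux_dmap_compl hT hA hq hA𝒜]; exact h⟩

lemma aux_dmap_ustar (hT : gT T) (hA : IsAlgOn T 𝒜) {q r : Set (Set H)}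
    {A : Set H} (hA𝒜 : A ∈ 𝒜) :
    dmap T (ustar T 𝒜 q r) A = dmap T q (dmap T r A) := by
  ext g
  constructor
  · rintro ⟨hgT, h⟩
    exact ⟨hgT, by rw [← aux_dmap_trL hT (hT.2.1 _ hgT) A]; exact h.2⟩
  · rintro ⟨hgT, h⟩
    refine ⟨hgT, hA.2.2.2.2.2 g⁻¹ (hT.2.1 _ hgT) A hA𝒜, ?_⟩
    rw [aux_dmap_trL hT (hT.2.1 _ hgT) A]; exact h

lemma aux_ustar_assoc (hT : gT T) (hA : IsAlgOn T 𝒜) (hD : DClosedOn T 𝒜)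
    {p q r : Set (Set H)} (hp : IsUltraOn T 𝒜 p) (hq : IsUltraOn T 𝒜 q)
    (hr : IsUltraOn T 𝒜 r) :
    ustar T 𝒜 (ustar T 𝒜 p q) r = ustar T 𝒜 p (ustar T 𝒜 q r) := by
  ext A
  constructor
  · rintro ⟨hA𝒜, -, h⟩
    exact ⟨hA𝒜, by rw [aux_dmap_ustar hT hA hA𝒜]; exact h⟩
  · rintro ⟨hA𝒜, h⟩
    rw [aux_dmap_ustar hT hA hA𝒜] at h
    exact ⟨hA𝒜, hD r hr A hA𝒜, h⟩

/-- The principal ultrafilter at a point. -/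
def auxPrinc (𝒜 : Set (Set H)) (g : H) : Set (Set H) := {A | A ∈ 𝒜 ∧ g ∈ A}

lemma aux_princ_ultra (hA : IsAlgOn T 𝒜) {g : H} (hg : g ∈ T) :
    IsUltraOn T 𝒜 (auxPrinc 𝒜 g) := by
  refine ⟨fun A h => h.1, fun h => h.2, ⟨hA.2.2.1, hg⟩, ?_, ?_, ?_⟩
  · intro A hA' B hB'
    exact ⟨aux_inter_mem𝒜 hA hA'.1 hB'.1, hA'.2, hB'.2⟩
  · intro A hA' B hB𝒜 hsub
    exact ⟨hB𝒜, hsub hA'.2⟩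
  · intro A hA𝒜
    by_cases h : g ∈ A
    · exact Or.inl ⟨hA𝒜, h⟩
    · exact Or.inr ⟨hA.2.2.2.1 A hA𝒜, hg, h⟩

lemma aux_princ_one_ustar (hT : gT T) (hA : IsAlgOn T 𝒜) (hD : DClosedOn T 𝒜)
    {q : Set (Set H)} (hq : IsUltraOn T 𝒜 q) :
    ustar T 𝒜 (auxPrinc 𝒜 1) q = q := by
  ext A
  constructor
  · rintro ⟨hA𝒜, -, -, htr⟩
    rwa [inv_one, aux_trL_one] at htr
  · intro hAq
    have hA𝒜 := hq.1 hAq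
    exact ⟨hA𝒜, hD q hq A hA𝒜, hT.1, by rw [inv_one, aux_trL_one]; exact hAq⟩

/-- A closed set of ultrafilters. -/
def auxCl (T : Set H) (𝒜 : Set (Set H)) (X : Set (Set (Set H))) : Prop :=
  (∀ x ∈ X, IsUltraOn T 𝒜 x) ∧
    ∀ q, IsUltraOn T 𝒜 q → (∀ C ∈ q, ∃ x ∈ X, C ∈ x) → q ∈ X

/-- Every proper filter extends to an ultrafilter on the algebra. -/
lemma aux_extend (hA : IsAlgOn T 𝒜) {F : Set (Set H)}
    (hF𝒜 : F ⊆ 𝒜) (hFT : T ∈ F) (hFi : ∀ A ∈ F, ∀ B ∈ F, A ∩ B ∈ F)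
    (hFne : ∀ A ∈ F, A.Nonempty) : ∃ p, IsUltraOn T 𝒜 p ∧ F ⊆ p := by
  set S : Set (Set (Set H)) :=
    {F' | F ⊆ F' ∧ F' ⊆ 𝒜 ∧ T ∈ F' ∧ (∀ A ∈ F', ∀ B ∈ F', A ∩ B ∈ F') ∧
      ∀ A ∈ F', A.Nonempty} with hS
  have hchain : ∀ c ⊆ S, IsChain (· ⊆ ·) c → c.Nonempty →
      ∃ ub ∈ S, ∀ s ∈ c, s ⊆ ub := by
    intro c hcS hc hcne
    obtain ⟨F₀, hF₀⟩ := hcne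
    refine ⟨⋃₀ c, ⟨?_, ?_, ?_, ?_, ?_⟩, fun s hs => Set.subset_sUnion_of_mem hs⟩
    · exact subset_trans (hcS hF₀).1 (Set.subset_sUnion_of_mem hF₀)
    · rintro A ⟨s, hs, hAs⟩; exact (hcS hs).2.1 hAs
    · exact ⟨F₀, hF₀, (hcS hF₀).2.2.1⟩
    · rintro A ⟨s1, hs1, hA1⟩ B ⟨s2, hs2, hB2⟩
      rcases eq_or_ne s1 s2 with rfl | hne
      · exact ⟨s1, hs1, (hcS hs1).2.2.2.1 _ hA1 _ hB2⟩
      · rcases hc hs1 hs2 hne with h | h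
        · exact ⟨s2, hs2, (hcS hs2).2.2.2.1 _ (h hA1) _ hB2⟩
        · exact ⟨s1, hs1, (hcS hs1).2.2.2.1 _ hA1 _ (h hB2)⟩
    · rintro A ⟨s, hs, hAs⟩; exact (hcS hs).2.2.2.2 _ hAs
  obtain ⟨M, hFM, hMmax⟩ :=
    zorn_subset_nonempty S hchain F ⟨Set.Subset.rfl, hF𝒜, hFT, hFi, hFne⟩
  obtain ⟨hFM', hM𝒜, hMT, hMi, hMne⟩ := hMmax.prop
  have hmax : ∀ F' ∈ S, M ⊆ F' → F' = M := fun F' h1 h2 =>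
    Set.Subset.antisymm (hMmax.2 h1 h2) h2
  have key : ∀ B ∈ 𝒜, B ∉ M → ∃ C ∈ M, C ∩ B = ∅ := by
    intro B hB𝒜 hBM
    by_contra hk
    push_neg at hk
    set F' : Set (Set H) := M ∪ {D | ∃ C ∈ M, D = C ∩ B} with hF'
    have hMF' : M ⊆ F' := Set.subset_union_left
    have hSF' : F' ∈ S := by
      refine ⟨subset_trans hFM' hMF', ?_, Or.inl hMT, ?_, ?_⟩
      · rintro D (hD | ⟨C, hC, rfl⟩)
        · exact hM𝒜 hD
        · exact aux_inter_mem𝒜 hA (hM𝒜 hC) hB𝒜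
      · rintro D (hD | ⟨C, hC, rfl⟩) E (hE | ⟨C', hC', rfl⟩)
        · exact Or.inl (hMi _ hD _ hE)
        · exact Or.inr ⟨D ∩ C', hMi _ hD _ hC', (Set.inter_assoc D C' B).symm⟩
        · refine Or.inr ⟨C ∩ E, hMi _ hC _ hE, ?_⟩
          ext x; constructor
          · rintro ⟨⟨h1, h2⟩, h3⟩; exact ⟨⟨h1, h3⟩, h2⟩
          · rintro ⟨⟨h1, h2⟩, h3⟩; exact ⟨⟨h1, h3⟩, h2⟩
        · refine Or.inr ⟨C ∩ C', hMi _ hC _ hC', ?_⟩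
          ext x; constructor
          · rintro ⟨⟨h1, h2⟩, h3, h4⟩; exact ⟨⟨h1, h3⟩, h2⟩
          · rintro ⟨⟨h1, h2⟩, h3⟩; exact ⟨⟨h1, h3⟩, h2, h3⟩
      · rintro D (hD | ⟨C, hC, rfl⟩)
        · exact hMne _ hD
        · exact hk C hC
    have hEq : F' = M := hmax F' hSF' hMF'
    have hBF' : B ∈ F' := by
      refine Or.inr ⟨T, hMT, ?_⟩
      rw [Set.inter_eq_self_of_subset_right (hA.1 B hB𝒜)]
    rw [hEq] at hBF'
    exact hBM hBF'
  have hdec : ∀ A ∈ 𝒜, A ∈ M ∨ T \ A ∈ M := by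
    intro A hA𝒜
    by_contra hcon
    push_neg at hcon
    obtain ⟨hAM, hCM⟩ := hcon
    obtain ⟨C, hC, hCA⟩ := key A hA𝒜 hAM
    obtain ⟨C', hC', hC'A⟩ := key (T \ A) (hA.2.2.2.1 A hA𝒜) hCM
    obtain ⟨x, hx1, hx2⟩ := hMne _ (hMi _ hC _ hC')
    have hxT : x ∈ T := hA.1 C (hM𝒜 hC) hx1
    have hxA : x ∉ A := fun h => by
      have : x ∈ C ∩ A := ⟨hx1, h⟩
      rw [hCA] at this; exact this
    have : x ∈ C' ∩ (T \ A) := ⟨hx2, hxT, hxA⟩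
    rw [hC'A] at this; exact this
  have hup : ∀ A ∈ M, ∀ B ∈ 𝒜, A ⊆ B → B ∈ M := by
    intro A hAM B hB𝒜 hsub
    rcases hdec B hB𝒜 with h | h
    · exact h
    · exfalso
      obtain ⟨x, hx1, hx2⟩ := hMne _ (hMi _ hAM _ h)
      exact hx2.2 (hsub hx1)
  have hnemp : (∅ : Set H) ∉ M := fun h => by
    obtain ⟨x, hx⟩ := hMne _ h; exact hx
  exact ⟨M, ⟨hM𝒜, hnemp, hMT, hMi, hup, hdec⟩, hFM⟩

/-- Compactness: a chain of nonempty closed sets has a common point. -/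
lemma aux_sInter_mem (hT : gT T) (hA : IsAlgOn T 𝒜)
    (c : Set (Set (Set (Set H)))) (hc : IsChain (· ⊆ ·) c) (hcne : c.Nonempty)
    (h : ∀ X ∈ c, auxCl T 𝒜 X ∧ X.Nonempty) : (⋂₀ c).Nonempty := by
  obtain ⟨X₀, hX₀⟩ := hcne
  set F : Set (Set H) := {B | B ∈ 𝒜 ∧ ∃ X ∈ c, ∀ x ∈ X, B ∈ x} with hF
  have h𝒜 : F ⊆ 𝒜 := fun B hB => hB.1
  have hFT : T ∈ F := by
    refine ⟨hA.2.2.1, X₀, hX₀, fun x hx => ?_⟩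
    exact ((h X₀ hX₀).1.1 x hx).2.2.1
  have hFi : ∀ A ∈ F, ∀ B ∈ F, A ∩ B ∈ F := by
    rintro A ⟨hA𝒜, X1, hX1, h1⟩ B ⟨hB𝒜, X2, hX2, h2⟩
    refine ⟨aux_inter_mem𝒜 hA hA𝒜 hB𝒜, ?_⟩
    rcases eq_or_ne X1 X2 with rfl | hne
    · exact ⟨X1, hX1, fun x hx => ((h X1 hX1).1.1 x hx).2.2.2.1 _ (h1 x hx) _ (h2 x hx)⟩
    · rcases hc hX1 hX2 hne with hss | hss
      · exact ⟨X1, hX1, fun x hx =>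
          ((h X1 hX1).1.1 x hx).2.2.2.1 _ (h1 x hx) _ (h2 x (hss hx))⟩
      · exact ⟨X2, hX2, fun x hx =>
          ((h X2 hX2).1.1 x hx).2.2.2.1 _ (h1 x (hss hx)) _ (h2 x hx)⟩
  have hFne : ∀ A ∈ F, A.Nonempty := by
    rintro A ⟨hA𝒜, X1, hX1, h1⟩
    obtain ⟨x, hx⟩ := (h X1 hX1).2
    exact aux_nonempty_of_mem ((h X1 hX1).1.1 x hx) (h1 x hx)
  obtain ⟨p, hp, hFp⟩ := aux_extend hA h𝒜 hFT hFi hFne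
  refine ⟨p, ?_⟩
  intro X hX
  refine (h X hX).1.2 p hp ?_
  intro C hCp
  by_contra hno
  push_neg at hno
  have hCcompl : T \ C ∈ F := by
    refine ⟨hA.2.2.2.1 C (hp.1 hCp), X, hX, fun x hx => ?_⟩
    exact aux_compl_mem ((h X hX).1.1 x hx) (hp.1 hCp) (hno x hx)
  exact aux_not_both hp hCp (hFp hCcompl)

/-- The image of a closed set under right translation is closed. -/
lemma aux_image_closed (hT : gT T) (hA : IsAlgOn T 𝒜) (hD : DClosedOn T 𝒜)
    {x : Set (Set H)} (hx : IsUltraOn T 𝒜 x)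
    {X : Set (Set (Set H))} (hX : auxCl T 𝒜 X) (hXne : X.Nonempty) :
    auxCl T 𝒜 {m | ∃ q ∈ X, m = ustar T 𝒜 q x} := by
  constructor
  · rintro m ⟨q, hq, rfl⟩
    exact aux_ustar_ultra hT hA hD (hX.1 q hq) hx
  · intro t ht hmeet
    set F : Set (Set H) :=
      {B | ∃ B₁, (B₁ ∈ 𝒜 ∧ ∀ y ∈ X, B₁ ∈ y) ∧ ∃ A ∈ t, B = B₁ ∩ dmap T x A} with hF
    have h𝒜 : F ⊆ 𝒜 := by
      rintro B ⟨B₁, ⟨hB₁, -⟩, A, hAt, rfl⟩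
      exact aux_inter_mem𝒜 hA hB₁ (hD x hx A (ht.1 hAt))
    have hFT : T ∈ F := by
      refine ⟨T, ⟨hA.2.2.1, fun y hy => (hX.1 y hy).2.2.1⟩, T, ht.2.2.1, ?_⟩
      rw [aux_dmap_T hT hx, Set.inter_self]
    have hFi : ∀ A ∈ F, ∀ B ∈ F, A ∩ B ∈ F := by
      rintro B ⟨B₁, ⟨hB₁, hB₁X⟩, A, hAt, rfl⟩ B' ⟨B₁', ⟨hB₁', hB₁X'⟩, A', hAt', rfl⟩
      refine ⟨B₁ ∩ B₁', ⟨aux_inter_mem𝒜 hA hB₁ hB₁', fun y hy =>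
        (hX.1 y hy).2.2.2.1 _ (hB₁X y hy) _ (hB₁X' y hy)⟩, A ∩ A',
        ht.2.2.2.1 _ hAt _ hAt', ?_⟩
      rw [aux_dmap_inter hA hx (ht.1 hAt) (ht.1 hAt') hT]
      ext z; constructor
      · rintro ⟨⟨z1, z2⟩, z3, z4⟩; exact ⟨⟨z1, z3⟩, z2, z4⟩
      · rintro ⟨⟨z1, z2⟩, z3, z4⟩; exact ⟨⟨z1, z3⟩, z2, z4⟩
    have hFne : ∀ B ∈ F, B.Nonempty := by
      rintro B ⟨B₁, ⟨hB₁, hB₁X⟩, A, hAt, rfl⟩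
      obtain ⟨m, ⟨q, hqX, rfl⟩, hAm⟩ := hmeet A hAt
      have h1 : dmap T x A ∈ q := hAm.2
      have h2 : B₁ ∈ q := hB₁X q hqX
      exact aux_nonempty_of_mem (hX.1 q hqX) ((hX.1 q hqX).2.2.2.1 _ h2 _ h1)
    obtain ⟨s, hs, hFs⟩ := aux_extend hA h𝒜 hFT hFi hFne
    have hsX : s ∈ X := by
      refine hX.2 s hs ?_
      intro C hCs
      by_contra hno
      push_neg at hno
      have : T \ C ∈ F := by
        refine ⟨T \ C, ⟨hA.2.2.2.1 C (hs.1 hCs), fun y hy =>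
          aux_compl_mem (hX.1 y hy) (hs.1 hCs) (hno y hy)⟩, T, ht.2.2.1, ?_⟩
        rw [aux_dmap_T hT hx, Set.inter_eq_self_of_subset_left Set.diff_subset]
      exact aux_not_both hs hCs (hFs this)
    refine ⟨s, hsX, ?_⟩
    apply aux_ultra_eq_of_subset ht (aux_ustar_ultra hT hA hD hs hx)
    intro A hAt
    refine ⟨ht.1 hAt, hFs ⟨T, ⟨hA.2.2.1, fun y hy => (hX.1 y hy).2.2.1⟩, A, hAt, ?_⟩⟩
    · rw [Set.inter_eq_self_of_subset_right aux_dmap_subT]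

/-- The left orbit of an ultrafilter. -/
def auxOrb (T : Set H) (𝒜 : Set (Set H)) (x : Set (Set H)) : Set (Set (Set H)) :=
  {m | ∃ q ∈ {y | IsUltraOn T 𝒜 y}, m = ustar T 𝒜 q x}

lemma aux_univ_closed : auxCl T 𝒜 {y | IsUltraOn T 𝒜 y} :=
  ⟨fun _ h => h, fun _ hq _ => hq⟩

lemma aux_univ_nonempty (hT : gT T) (hA : IsAlgOn T 𝒜) :
    Set.Nonempty {y | IsUltraOn T 𝒜 y} :=
  ⟨auxPrinc 𝒜 1, aux_princ_ultra hA hT.1⟩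

lemma aux_orb_closed (hT : gT T) (hA : IsAlgOn T 𝒜) (hD : DClosedOn T 𝒜)
    {x : Set (Set H)} (hx : IsUltraOn T 𝒜 x) : auxCl T 𝒜 (auxOrb T 𝒜 x) :=
  aux_image_closed hT hA hD hx aux_univ_closed (aux_univ_nonempty hT hA)

lemma aux_orb_LI (hT : gT T) (hA : IsAlgOn T 𝒜) (hD : DClosedOn T 𝒜)
    {x : Set (Set H)} (hx : IsUltraOn T 𝒜 x) : IsLeftIdealU T 𝒜 (auxOrb T 𝒜 x) := by
  refine ⟨⟨ustar T 𝒜 (auxPrinc 𝒜 1) x, auxPrinc 𝒜 1, aux_princ_ultra hA hT.1, rfl⟩, ?_, ?_⟩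
  · rintro m ⟨q, hq, rfl⟩
    exact aux_ustar_ultra hT hA hD hq hx
  · rintro p hp m ⟨q, hq, rfl⟩
    exact ⟨ustar T 𝒜 p q, aux_ustar_ultra hT hA hD hp hq,
      (aux_ustar_assoc hT hA hD hp hq hx).symm⟩

lemma aux_mem_orb_self (hT : gT T) (hA : IsAlgOn T 𝒜) (hD : DClosedOn T 𝒜)
    {x : Set (Set H)} (hx : IsUltraOn T 𝒜 x) : x ∈ auxOrb T 𝒜 x :=
  ⟨auxPrinc 𝒜 1, aux_princ_ultra hA hT.1, (aux_princ_one_ustar hT hA hD hx).symm⟩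

/-- Existence of a minimal closed left ideal inside a closed left ideal;
it is a minimal left ideal. -/
lemma aux_exists_min_LI (hT : gT T) (hA : IsAlgOn T 𝒜) (hD : DClosedOn T 𝒜)
    {X₀ : Set (Set (Set H))} (hcl : auxCl T 𝒜 X₀) (hLI : IsLeftIdealU T 𝒜 X₀) :
    ∃ M, M ⊆ X₀ ∧ IsMinLeftIdealU T 𝒜 M ∧ auxCl T 𝒜 M := by
  set S : Set (Set (Set (Set H))) :=
    {Y | Y ⊆ X₀ ∧ auxCl T 𝒜 Y ∧ IsLeftIdealU T 𝒜 Y} with hS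
  have hchain : ∀ c ⊆ S, IsChain (· ⊆ ·) c → c.Nonempty →
      ∃ lb ∈ S, ∀ s ∈ c, lb ⊆ s := by
    intro c hcS hc hcne
    obtain ⟨X1, hX1⟩ := hcne
    have hne : (⋂₀ c).Nonempty := by
      apply aux_sInter_mem hT hA c hc ⟨X1, hX1⟩
      intro X hX
      exact ⟨(hcS hX).2.1, (hcS hX).2.2.1⟩
    have hclI : auxCl T 𝒜 (⋂₀ c) := by
      constructor
      · intro x hx
        exact (hcS hX1).2.1.1 x (hx X1 hX1)
      · intro q hq hmeet
        intro X hX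
        refine (hcS hX).2.1.2 q hq ?_
        intro C hC
        obtain ⟨x, hx, hCx⟩ := hmeet C hC
        exact ⟨x, hx X hX, hCx⟩
    refine ⟨⋂₀ c, ⟨?_, hclI, ?_, ?_, ?_⟩, fun s hs => Set.sInter_subset_of_mem hs⟩
    · exact subset_trans (Set.sInter_subset_of_mem hX1) (hcS hX1).1
    · exact hne
    · intro q hq
      exact (hcS hX1).2.2.2.1 q (hq X1 hX1)
    · intro p hp q hq X hX
      exact (hcS hX).2.2.2.2 p hp q (hq X hX)
  obtain ⟨M, hMX₀, hMmin⟩ :=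
    zorn_superset_nonempty S hchain X₀ ⟨Set.Subset.rfl, hcl, hLI⟩
  obtain ⟨hMX, hMcl, hMLI⟩ := hMmin.prop
  refine ⟨M, hMX₀, ⟨hMLI, ?_⟩, hMcl⟩
  intro J hJM hJ
  obtain ⟨xx, hxx⟩ := hJ.1
  have hxu : IsUltraOn T 𝒜 xx := hJ.2.1 xx hxx
  have hOrb : auxOrb T 𝒜 xx ⊆ J := by
    rintro m ⟨q, hq, rfl⟩
    exact hJ.2.2 q hq xx hxx
  have hOS : auxOrb T 𝒜 xx ∈ S :=
    ⟨subset_trans (hOrb.trans hJM) hMX, aux_orb_closed hT hA hD hxu, aux_orb_LI hT hA hD hxu⟩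
  have hMOrb : M ⊆ auxOrb T 𝒜 xx := hMmin.2 hOS (hOrb.trans hJM)
  exact Set.Subset.antisymm hJM (hMOrb.trans hOrb)

lemma aux_min_orb (hT : gT T) (hA : IsAlgOn T 𝒜) (hD : DClosedOn T 𝒜)
    {I : Set (Set (Set H))} (hI : IsMinLeftIdealU T 𝒜 I) {x : Set (Set H)}
    (hx : x ∈ I) : auxOrb T 𝒜 x = I := by
  apply hI.2
  · rintro m ⟨q, hq, rfl⟩
    exact hI.1.2.2 q hq x hx
  · exact aux_orb_LI hT hA hD (hI.1.2.1 x hx)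

lemma aux_min_closed (hT : gT T) (hA : IsAlgOn T 𝒜) (hD : DClosedOn T 𝒜)
    {I : Set (Set (Set H))} (hI : IsMinLeftIdealU T 𝒜 I) : auxCl T 𝒜 I := by
  obtain ⟨x, hx⟩ := hI.1.1
  rw [← aux_min_orb hT hA hD hI hx]
  exact aux_orb_closed hT hA hD (hI.1.2.1 x hx)

lemma aux_fixer_closed (hT : gT T) (hA : IsAlgOn T 𝒜) (hD : DClosedOn T 𝒜)
    {Y : Set (Set (Set H))} {x : Set (Set H)} (hx : IsUltraOn T 𝒜 x)
    (hYcl : auxCl T 𝒜 Y) :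
    auxCl T 𝒜 {y ∈ Y | ustar T 𝒜 y x = x} := by
  constructor
  · rintro y ⟨hy, -⟩
    exact hYcl.1 y hy
  · intro t ht hmeet
    have htY : t ∈ Y := by
      refine hYcl.2 t ht ?_
      intro C hC
      obtain ⟨y, hy, hCy⟩ := hmeet C hC
      exact ⟨y, hy.1, hCy⟩
    refine ⟨htY, ?_⟩
    have hsub : x ⊆ ustar T 𝒜 t x := by
      intro A hAx
      have hA𝒜 := hx.1 hAx
      refine ⟨hA𝒜, ?_⟩
      by_contra hd
      have h2 : T \ dmap T x A ∈ t := aux_compl_mem ht (hD x hx A hA𝒜) hd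
      obtain ⟨y, hy, hCy⟩ := hmeet _ h2
      have h3 : A ∈ ustar T 𝒜 y x := by rw [hy.2]; exact hAx
      exact aux_not_both (hYcl.1 y hy.1) h3.2 hCy
    exact (aux_ultra_eq_of_subset hx (aux_ustar_ultra hT hA hD ht hx) hsub).symm

/-- Ellis' idempotent lemma. -/
lemma aux_ellis (hT : gT T) (hA : IsAlgOn T 𝒜) (hD : DClosedOn T 𝒜)
    {X : Set (Set (Set H))} (hcl : auxCl T 𝒜 X) (hne : X.Nonempty)
    (hmul : ∀ a ∈ X, ∀ b ∈ X, ustar T 𝒜 a b ∈ X) :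
    ∃ u ∈ X, ustar T 𝒜 u u = u := by
  set S : Set (Set (Set (Set H))) :=
    {Y | Y ⊆ X ∧ Y.Nonempty ∧ auxCl T 𝒜 Y ∧ ∀ a ∈ Y, ∀ b ∈ Y, ustar T 𝒜 a b ∈ Y} with hS
  have hchain : ∀ c ⊆ S, IsChain (· ⊆ ·) c → c.Nonempty →
      ∃ lb ∈ S, ∀ s ∈ c, lb ⊆ s := by
    intro c hcS hc hcne
    obtain ⟨X1, hX1⟩ := hcne
    have hne' : (⋂₀ c).Nonempty := by
      apply aux_sInter_mem hT hA c hc ⟨X1, hX1⟩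
      intro Y hY
      exact ⟨(hcS hY).2.2.1, (hcS hY).2.1⟩
    refine ⟨⋂₀ c, ⟨?_, hne', ⟨?_, ?_⟩, ?_⟩, fun s hs => Set.sInter_subset_of_mem hs⟩
    · exact subset_trans (Set.sInter_subset_of_mem hX1) (hcS hX1).1
    · intro y hy
      exact (hcS hX1).2.2.1.1 y (hy X1 hX1)
    · intro q hq hmeet Y hY
      refine (hcS hY).2.2.1.2 q hq ?_
      intro C hC
      obtain ⟨y, hy, hCy⟩ := hmeet C hC
      exact ⟨y, hy Y hY, hCy⟩
    · intro a ha b hb Y hY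
      exact (hcS hY).2.2.2 a (ha Y hY) b (hb Y hY)
  obtain ⟨Y, hYX0, hYmin⟩ := zorn_superset_nonempty S hchain X ⟨Set.Subset.rfl, hne, hcl, hmul⟩
  obtain ⟨hYX, hYne, hYcl, hYmul⟩ := hYmin.prop
  obtain ⟨x, hxY⟩ := hYne
  have hxu : IsUltraOn T 𝒜 x := hYcl.1 x hxY
  set Y₁ : Set (Set (Set H)) := {m | ∃ q ∈ Y, m = ustar T 𝒜 q x} with hY₁
  have hY₁Y : Y₁ ⊆ Y := by
    rintro m ⟨q, hq, rfl⟩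
    exact hYmul q hq x hxY
  have hY₁S : Y₁ ∈ S := by
    refine ⟨hY₁Y.trans hYX, ⟨ustar T 𝒜 x x, x, hxY, rfl⟩,
      aux_image_closed hT hA hD hxu hYcl ⟨x, hxY⟩, ?_⟩
    rintro m ⟨q, hq, rfl⟩ m' ⟨q', hq', rfl⟩
    refine ⟨ustar T 𝒜 (ustar T 𝒜 q x) q', hYmul _ (hYmul q hq x hxY) _ hq', ?_⟩
    exact (aux_ustar_assoc hT hA hD
      (aux_ustar_ultra hT hA hD (hYcl.1 q hq) hxu) (hYcl.1 q' hq') hxu).symm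
  have hYY₁ : Y ⊆ Y₁ := hYmin.2 hY₁S hY₁Y
  obtain ⟨q₀, hq₀Y, hq₀⟩ := hYY₁ hxY
  set Y₂ : Set (Set (Set H)) := {y ∈ Y | ustar T 𝒜 y x = x} with hY₂
  have hY₂S : Y₂ ∈ S := by
    refine ⟨fun y hy => hYX hy.1, ⟨q₀, hq₀Y, hq₀.symm⟩,
      aux_fixer_closed hT hA hD hxu hYcl, ?_⟩
    rintro a ⟨haY, ha⟩ b ⟨hbY, hb⟩
    refine ⟨hYmul a haY b hbY, ?_⟩
    rw [aux_ustar_assoc hT hA hD (hYcl.1 a haY) (hYcl.1 b hbY) hxu, hb, ha]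
  have hYY₂ : Y ⊆ Y₂ := hYmin.2 hY₂S (fun y hy => hy.1)
  exact ⟨x, hYX hxY, (hYY₂ hxY).2⟩

end TA
end AuxLib

section CombLemmas
variable {H : Type*} [Group H] (C : CombSetup H)

lemma aux_sharp_univ : C.sharp (C.G : Set H) = Set.univ := by
  have h := C.sharp_compl ∅ C.alg𝒜.2.1
  rw [Set.diff_empty] at h
  rw [h, C.sharp_empty, Set.compl_empty]

lemma aux_sharp_mono {A B : Set H} (hA : A ∈ C.𝒜) (hB : B ∈ C.𝒜) (h : A ⊆ B) :
    C.sharp A ⊆ C.sharp B := by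
  have h1 := C.sharp_union A hA B hB
  rw [Set.union_eq_self_of_subset_left h] at h1
  rw [h1]
  exact Set.subset_union_left

lemma aux_sharp_inter {A B : Set H} (hA : A ∈ C.𝒜) (hB : B ∈ C.𝒜) :
    C.sharp (A ∩ B) = C.sharp A ∩ C.sharp B := by
  have key : A ∩ B = (C.G : Set H) \ (((C.G : Set H) \ A) ∪ ((C.G : Set H) \ B)) :=
    aux_inter_eqT (C.alg𝒜.1 A hA)
  have hcA : (C.G : Set H) \ A ∈ C.𝒜 := C.alg𝒜.2.2.2.1 A hA
  have hcB : (C.G : Set H) \ B ∈ C.𝒜 := C.alg𝒜.2.2.2.1 B hB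
  rw [key, C.sharp_compl _ (C.alg𝒜.2.2.2.2.1 _ hcA _ hcB), C.sharp_union _ hcA _ hcB,
    C.sharp_compl A hA, C.sharp_compl B hB, Set.compl_union, compl_compl, compl_compl]

lemma aux_res_ultra {m : Set (Set H)} (hm : IsUltraOn (Set.univ : Set H) C.ℬ m) :
    IsUltraOn (C.G : Set H) C.𝒜 (C.res m) := by
  refine ⟨fun A h => h.1, ?_, ?_, ?_, ?_, ?_⟩
  · intro h
    exact hm.2.1 (by rw [← C.sharp_empty]; exact h.2)
  · exact ⟨C.alg𝒜.2.2.1, by rw [aux_sharp_univ]; exact hm.2.2.1⟩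
  · intro A hA B hB
    exact ⟨aux_inter_mem𝒜 C.alg𝒜 hA.1 hB.1,
      by rw [aux_sharp_inter C hA.1 hB.1]; exact hm.2.2.2.1 _ hA.2 _ hB.2⟩
  · intro A hA B hB𝒜 hsub
    exact ⟨hB𝒜, hm.2.2.2.2.1 _ hA.2 _ (C.sharp_mem B hB𝒜) (aux_sharp_mono C hA.1 hB𝒜 hsub)⟩
  · intro A hA𝒜
    rcases hm.2.2.2.2.2 (C.sharp A) (C.sharp_mem A hA𝒜) with h | h
    · exact Or.inl ⟨hA𝒜, h⟩
    · refine Or.inr ⟨C.alg𝒜.2.2.2.1 A hA𝒜, ?_⟩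
      rw [C.sharp_compl A hA𝒜]
      rwa [← Set.compl_eq_univ_diff] at h
  
lemma aux_coe_ultra {p : Set (Set H)} (hp : IsUltraOn (C.G : Set H) C.𝒜 p) :
    IsUltraOn (Set.univ : Set H) C.ℬ (C.coheirExt p) := by
  refine ⟨fun B h => h.1, ?_, ?_, ?_, ?_, ?_⟩
  · intro h
    exact hp.2.1 (by rw [← Set.empty_inter (C.G : Set H)]; exact h.2)
  · exact ⟨C.algℬ.2.2.1, by rw [Set.univ_inter]; exact hp.2.2.1⟩
  · intro B hB B' hB'
    refine ⟨aux_inter_mem𝒜 C.algℬ hB.1 hB'.1, ?_⟩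
    have : (B ∩ B') ∩ (C.G : Set H) = (B ∩ (C.G : Set H)) ∩ (B' ∩ (C.G : Set H)) := by
      ext x; simp only [Set.mem_inter_iff]; tauto
    rw [this]
    exact hp.2.2.2.1 _ hB.2 _ hB'.2
  · intro B hB B' hB'ℬ hsub
    exact ⟨hB'ℬ, hp.2.2.2.2.1 _ hB.2 _ (C.restrict_mem B' hB'ℬ)
      (Set.inter_subset_inter_left _ hsub)⟩
  · intro B hBℬ
    rcases hp.2.2.2.2.2 (B ∩ (C.G : Set H)) (C.restrict_mem B hBℬ) with h | h
    · exact Or.inl ⟨hBℬ, h⟩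
    · refine Or.inr ⟨C.algℬ.2.2.2.1 B hBℬ, ?_⟩
      have : (Set.univ \ B) ∩ (C.G : Set H) = (C.G : Set H) \ (B ∩ (C.G : Set H)) := by
        ext x; simp only [Set.mem_inter_iff, Set.mem_diff, Set.mem_univ, true_and]; tauto
      rw [this]
      exact h

lemma aux_res_coe {p : Set (Set H)} (hp : IsUltraOn (C.G : Set H) C.𝒜 p) :
    C.res (C.coheirExt p) = p := by
  apply Set.Subset.antisymm
  · rintro A ⟨hA𝒜, -, hmem⟩
    rwa [C.sharp_inter A hA𝒜] at hmem
  · intro A hA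
    have hA𝒜 := hp.1 hA
    exact ⟨hA𝒜, C.sharp_mem A hA𝒜, by rw [C.sharp_inter A hA𝒜]; exact hA⟩

lemma aux_trL_inter_G {g : H} (hg : g ∈ (C.G : Set H)) (B : Set H) :
    trL g⁻¹ B ∩ (C.G : Set H) = trL g⁻¹ (B ∩ (C.G : Set H)) := by
  ext x
  simp only [Set.mem_inter_iff, aux_mem_trL, inv_inv]
  constructor
  · rintro ⟨h1, h2⟩
    exact ⟨h1, mul_mem hg h2⟩
  · rintro ⟨h1, h2⟩
    refine ⟨h1, ?_⟩
    have := mul_mem (inv_mem hg) h2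
    simpa using this

lemma aux_dmap_sharp_inter {s : Set (Set H)} {A : Set H} (hA𝒜 : A ∈ C.𝒜) :
    dmap (Set.univ : Set H) s (C.sharp A) ∩ (C.G : Set H) = dmap (C.G : Set H) (C.res s) A := by
  ext g
  simp only [Set.mem_inter_iff, dmap, Set.mem_setOf_eq, Set.mem_univ, true_and]
  constructor
  · rintro ⟨h1, hgG⟩
    have hginv : g⁻¹ ∈ C.G := inv_mem hgG
    have htr : trL g⁻¹ A ∈ C.𝒜 := C.alg𝒜.2.2.2.2.2 g⁻¹ hginv A hA𝒜
    refine ⟨hgG, htr, ?_⟩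
    rw [C.sharp_trans g⁻¹ hginv A hA𝒜]
    exact h1
  · rintro ⟨hgG, h𝒜, hsh⟩
    refine ⟨?_, hgG⟩
    rw [← C.sharp_trans g⁻¹ (inv_mem hgG) A hA𝒜]
    exact hsh

lemma aux_coheir_rule {p s : Set (Set H)} (hp : IsUltraOn (C.G : Set H) C.𝒜 p)
    (hs : IsUltraOn (Set.univ : Set H) C.ℬ s) :
    C.res (ustar (Set.univ : Set H) C.ℬ (C.coheirExt p) s) =
      ustar (C.G : Set H) C.𝒜 p (C.res s) := by
  have h1 : IsUltraOn (Set.univ : Set H) C.ℬ (C.coheirExt p) := aux_coe_ultra C hp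
  have h2 : IsUltraOn (C.G : Set H) C.𝒜 (C.res (ustar (Set.univ : Set H) C.ℬ (C.coheirExt p) s)) :=
    aux_res_ultra C (aux_ustar_ultra gT_univ C.algℬ C.dclosedℬ h1 hs)
  have h3 : IsUltraOn (C.G : Set H) C.𝒜 (ustar (C.G : Set H) C.𝒜 p (C.res s)) :=
    aux_ustar_ultra (gT_subgroup C.G) C.alg𝒜 C.dclosed𝒜 hp (aux_res_ultra C hs)
  refine (aux_ultra_eq_of_subset h3 h2 ?_).symm
  rintro A ⟨hA𝒜, hd⟩
  refine ⟨hA𝒜, C.sharp_mem A hA𝒜, C.dclosedℬ s hs _ (C.sharp_mem A hA𝒜), ?_⟩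
  rw [aux_dmap_sharp_inter C hA𝒜]
  exact hd

lemma aux_coe_hom {p q : Set (Set H)} (hp : IsUltraOn (C.G : Set H) C.𝒜 p)
    (hq : IsUltraOn (C.G : Set H) C.𝒜 q) :
    ustar (Set.univ : Set H) C.ℬ (C.coheirExt p) (C.coheirExt q) =
      C.coheirExt (ustar (C.G : Set H) C.𝒜 p q) := by
  have h1 : IsUltraOn (Set.univ : Set H) C.ℬ
      (ustar (Set.univ : Set H) C.ℬ (C.coheirExt p) (C.coheirExt q)) :=
    aux_ustar_ultra gT_univ C.algℬ C.dclosedℬ (aux_coe_ultra C hp) (aux_coe_ultra C hq)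
  have h2 : IsUltraOn (Set.univ : Set H) C.ℬ (C.coheirExt (ustar (C.G : Set H) C.𝒜 p q)) :=
    aux_coe_ultra C (aux_ustar_ultra (gT_subgroup C.G) C.alg𝒜 C.dclosed𝒜 hp hq)
  refine (aux_ultra_eq_of_subset h2 h1 ?_).symm
  rintro B ⟨hBℬ, hBG𝒜, hBGd⟩
  refine ⟨hBℬ, C.dclosedℬ _ (aux_coe_ultra C hq) B hBℬ, ?_⟩
  have key : dmap (Set.univ : Set H) (C.coheirExt q) B ∩ (C.G : Set H) =
      dmap (C.G : Set H) q (B ∩ (C.G : Set H)) := by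
    ext g
    simp only [Set.mem_inter_iff, dmap, Set.mem_setOf_eq, Set.mem_univ, true_and]
    constructor
    · rintro ⟨⟨hℬ', hq'⟩, hgG⟩
      refine ⟨hgG, ?_⟩
      rwa [aux_trL_inter_G C hgG B] at hq'
    · rintro ⟨hgG, hmem⟩
      refine ⟨⟨C.algℬ.2.2.2.2.2 g⁻¹ (Set.mem_univ _) B hBℬ, ?_⟩, hgG⟩
      rw [aux_trL_inter_G C hgG B]
      exact hmem
  rw [key]
  exact hBGd

end CombLemmas

/-- If every minimal left ideal of $S(ℬ)$ is a group, then every minimal left ideal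
of $S(𝒜)$ is a group. -/
theorem minLeftIdeal_group_descends (C : CombSetup H)
    (hB : ∀ I : Set (Set (Set H)), IsMinLeftIdealU (univ : Set H) C.ℬ I →
      IsGroupU (univ : Set H) C.ℬ I)
    (I : Set (Set (Set H))) (hI : IsMinLeftIdealU (C.G : Set H) C.𝒜 I) :
    IsGroupU (C.G : Set H) C.𝒜 I := by
  have hTA : gT ((C.G : Set H)) := gT_subgroup C.G
  have hTB : gT (Set.univ : Set H) := gT_univ
  have hAA := C.alg𝒜
  have hAB := C.algℬ
  have hDA := C.dclosed𝒜
  have hDB := C.dclosedℬ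
  -- Step 1: a minimal left ideal M₀ of S(ℬ); by hB it is a group with identity w.
  obtain ⟨M₀, hM₀sub, hM₀min, hM₀cl⟩ :=
    aux_exists_min_LI hTB hAB hDB
      (aux_orb_closed hTB hAB hDB (aux_princ_ultra hAB (Set.mem_univ (1:H))))
      (aux_orb_LI hTB hAB hDB (aux_princ_ultra hAB (Set.mem_univ (1:H))))
  obtain ⟨hMmul, w, hwM, hwid, hwinv⟩ := hB M₀ hM₀min
  have hM₀LI := hM₀min.1
  have hM₀u : ∀ m ∈ M₀, IsUltraOn (Set.univ : Set H) C.ℬ m := hM₀LI.2.1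
  -- M₀ has a unique idempotent, namely w.
  have huniqB : ∀ v ∈ M₀, ustar (Set.univ : Set H) C.ℬ v v = v → v = w := by
    intro v hv hvv
    obtain ⟨z, hz, hvz, hzv⟩ := hwinv v hv
    have h1 : v = ustar (Set.univ : Set H) C.ℬ v w := ((hwid v hv).2).symm
    rw [← hvz, ← aux_ustar_assoc hTB hAB hDB (hM₀u v hv) (hM₀u v hv) (hM₀u z hz),
      hvv, hvz] at h1
    exact h1
  -- Key: every idempotent of S(𝒜) is a left identity on res '' M₀.
  have hJkey : ∀ u, IsUltraOn (C.G : Set H) C.𝒜 u → ustar (C.G : Set H) C.𝒜 u u = u →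
      ∀ m ∈ M₀, ustar (C.G : Set H) C.𝒜 u (C.res m) = C.res m := by
    intro u hu huu m hm
    have heu : IsUltraOn (Set.univ : Set H) C.ℬ (C.coheirExt u) := aux_coe_ultra C hu
    have hewM : ustar (Set.univ : Set H) C.ℬ (C.coheirExt u) w ∈ M₀ :=
      hM₀LI.2.2 _ heu w hwM
    have hidem : ustar (Set.univ : Set H) C.ℬ
        (ustar (Set.univ : Set H) C.ℬ (C.coheirExt u) w)
        (ustar (Set.univ : Set H) C.ℬ (C.coheirExt u) w)
        = ustar (Set.univ : Set H) C.ℬ (C.coheirExt u) w := by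
      rw [aux_ustar_assoc hTB hAB hDB heu (hM₀u w hwM) (hM₀u _ hewM),
        (hwid _ hewM).1,
        ← aux_ustar_assoc hTB hAB hDB heu heu (hM₀u w hwM),
        aux_coe_hom C hu hu, huu]
    have hew : ustar (Set.univ : Set H) C.ℬ (C.coheirExt u) w = w := huniqB _ hewM hidem
    have hm' : ustar (Set.univ : Set H) C.ℬ (C.coheirExt u) m = m := by
      conv_lhs => rw [← (hwid m hm).1]
      rw [← aux_ustar_assoc hTB hAB hDB heu (hM₀u w hwM) (hM₀u m hm), hew, (hwid m hm).1]
    rw [← aux_coheir_rule C hu (hM₀u m hm), hm']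
  -- Step 2: a minimal closed left ideal I₁ inside res '' M₀.
  obtain ⟨m₀, hm₀⟩ := hM₀LI.1
  have hx₀u : IsUltraOn (C.G : Set H) C.𝒜 (C.res m₀) := aux_res_ultra C (hM₀u m₀ hm₀)
  have hOrbJ : ∀ y ∈ auxOrb (C.G : Set H) C.𝒜 (C.res m₀), ∃ m ∈ M₀, y = C.res m := by
    rintro y ⟨q, hq, rfl⟩
    refine ⟨ustar (Set.univ : Set H) C.ℬ (C.coheirExt q) m₀,
      hM₀LI.2.2 _ (aux_coe_ultra C hq) m₀ hm₀, ?_⟩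
    rw [aux_coheir_rule C hq (hM₀u m₀ hm₀)]
  obtain ⟨I₁, hI₁sub, hI₁min, hI₁cl⟩ := aux_exists_min_LI hTA hAA hDA
    (aux_orb_closed hTA hAA hDA hx₀u) (aux_orb_LI hTA hAA hDA hx₀u)
  have hI₁u : ∀ y ∈ I₁, IsUltraOn (C.G : Set H) C.𝒜 y := hI₁min.1.2.1
  have hI₁J : ∀ y ∈ I₁, ∃ m ∈ M₀, y = C.res m := fun y hy => hOrbJ y (hI₁sub hy)
  have hkey : ∀ u, IsUltraOn (C.G : Set H) C.𝒜 u → ustar (C.G : Set H) C.𝒜 u u = u →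
      ∀ y ∈ I₁, ustar (C.G : Set H) C.𝒜 u y = y := by
    intro u hu huu y hy
    obtain ⟨m, hm, rfl⟩ := hI₁J y hy
    exact hJkey u hu huu m hm
  obtain ⟨u₁, hu₁I₁, hu₁⟩ := aux_ellis hTA hAA hDA hI₁cl hI₁min.1.1
    (fun a ha b hb => hI₁min.1.2.2 a (hI₁u a ha) b hb)
  have hu₁u := hI₁u u₁ hu₁I₁
  -- Facts about I.
  have hILI := hI.1
  have hIu : ∀ x ∈ I, IsUltraOn (C.G : Set H) C.𝒜 x := hILI.2.1
  have hIcl : auxCl (C.G : Set H) C.𝒜 I := aux_min_closed hTA hAA hDA hI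
  obtain ⟨u, huI, huu⟩ := aux_ellis hTA hAA hDA hIcl hILI.1
    (fun a ha b hb => hILI.2.2 a (hIu a ha) b hb)
  have huu' := hIu u huI
  -- Right identity: every idempotent of I is a right identity on I.
  have hrid : ∀ v ∈ I, ustar (C.G : Set H) C.𝒜 v v = v →
      ∀ p ∈ I, ustar (C.G : Set H) C.𝒜 p v = p := by
    intro v hv hvv p hp
    have hmem : p ∈ auxOrb (C.G : Set H) C.𝒜 v := by
      rw [aux_min_orb hTA hAA hDA hI hv]; exact hp
    obtain ⟨s, hs, rfl⟩ := hmem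
    rw [aux_ustar_assoc hTA hAA hDA hs (hIu v hv) (hIu v hv), hvv]
  -- F2 : u₁ is a left identity on idempotents of I.
  have hF2 : ∀ v ∈ I, ustar (C.G : Set H) C.𝒜 v v = v →
      ustar (C.G : Set H) C.𝒜 u₁ v = v := by
    intro v hv hvv
    have hIvLI : IsLeftIdealU (C.G : Set H) C.𝒜
        {m | ∃ y ∈ I₁, m = ustar (C.G : Set H) C.𝒜 y v} := by
      refine ⟨⟨ustar (C.G : Set H) C.𝒜 u₁ v, u₁, hu₁I₁, rfl⟩, ?_, ?_⟩
      · rintro m ⟨y, hy, rfl⟩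
        exact aux_ustar_ultra hTA hAA hDA (hI₁u y hy) (hIu v hv)
      · rintro p hp m ⟨y, hy, rfl⟩
        exact ⟨ustar (C.G : Set H) C.𝒜 p y, hI₁min.1.2.2 p hp y hy,
          (aux_ustar_assoc hTA hAA hDA hp (hI₁u y hy) (hIu v hv)).symm⟩
    have hIvI : {m | ∃ y ∈ I₁, m = ustar (C.G : Set H) C.𝒜 y v} ⊆ I := by
      rintro m ⟨y, hy, rfl⟩
      exact hILI.2.2 y (hI₁u y hy) v hv
    have hIvEq := hI.2 _ hIvI hIvLI
    have hvmem : v ∈ {m | ∃ y ∈ I₁, m = ustar (C.G : Set H) C.𝒜 y v} := by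
      rw [hIvEq]; exact hv
    obtain ⟨y₀, hy₀, hy₀v⟩ := hvmem
    have hRcl : auxCl (C.G : Set H) C.𝒜 {y ∈ I₁ | ustar (C.G : Set H) C.𝒜 y v = v} :=
      aux_fixer_closed hTA hAA hDA (hIu v hv) hI₁cl
    have hRne : Set.Nonempty {y ∈ I₁ | ustar (C.G : Set H) C.𝒜 y v = v} :=
      ⟨y₀, hy₀, hy₀v.symm⟩
    have hRmul : ∀ a ∈ {y ∈ I₁ | ustar (C.G : Set H) C.𝒜 y v = v},
        ∀ b ∈ {y ∈ I₁ | ustar (C.G : Set H) C.𝒜 y v = v},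
        ustar (C.G : Set H) C.𝒜 a b ∈ {y ∈ I₁ | ustar (C.G : Set H) C.𝒜 y v = v} := by
      rintro a ⟨haI, ha⟩ b ⟨hbI, hb⟩
      refine ⟨hI₁min.1.2.2 a (hI₁u a haI) b hbI, ?_⟩
      rw [aux_ustar_assoc hTA hAA hDA (hI₁u a haI) (hI₁u b hbI) (hIu v hv), hb, ha]
    obtain ⟨u', hu'R, hu'⟩ := aux_ellis hTA hAA hDA hRcl hRne hRmul
    obtain ⟨hu'I₁, hu'v⟩ := hu'R
    have h1 : ustar (C.G : Set H) C.𝒜 u₁ u' = u' := hkey u₁ hu₁u hu₁ u' hu'I₁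
    have h2 : ustar (C.G : Set H) C.𝒜 u₁ u' = u₁ := by
      have hmem : u₁ ∈ auxOrb (C.G : Set H) C.𝒜 u' := by
        rw [aux_min_orb hTA hAA hDA hI₁min hu'I₁]; exact hu₁I₁
      obtain ⟨s, hs, hseq⟩ := hmem
      rw [hseq, aux_ustar_assoc hTA hAA hDA hs (hI₁u u' hu'I₁) (hI₁u u' hu'I₁), hu']
    have h3 : u₁ = u' := h2.symm.trans h1
    rw [h3]
    exact hu'v
  -- Uniqueness of idempotents in I.
  have huniq : ∀ v ∈ I, ustar (C.G : Set H) C.𝒜 v v = v → v = u := by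
    intro v hv hvv
    have ha1 : ustar (C.G : Set H) C.𝒜 u₁ v = v := hF2 v hv hvv
    have hb1 : ustar (C.G : Set H) C.𝒜 u u₁ = u₁ := hkey u huu' huu u₁ hu₁I₁
    have hc1 : ustar (C.G : Set H) C.𝒜 u v = u := hrid v hv hvv u huI
    calc v = ustar (C.G : Set H) C.𝒜 u₁ v := ha1.symm
      _ = ustar (C.G : Set H) C.𝒜 (ustar (C.G : Set H) C.𝒜 u u₁) v := by rw [hb1]
      _ = ustar (C.G : Set H) C.𝒜 u (ustar (C.G : Set H) C.𝒜 u₁ v) :=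
        aux_ustar_assoc hTA hAA hDA huu' hu₁u (hIu v hv)
      _ = ustar (C.G : Set H) C.𝒜 u v := by rw [ha1]
      _ = u := hc1
  -- Right identity for u.
  have hright : ∀ p ∈ I, ustar (C.G : Set H) C.𝒜 p u = p := hrid u huI huu
  -- Existence of left inverses.
  have hqex : ∀ p ∈ I, ∃ q ∈ I, ustar (C.G : Set H) C.𝒜 q p = u := by
    intro p hp
    have hLI' : IsLeftIdealU (C.G : Set H) C.𝒜
        {m | ∃ y ∈ I, m = ustar (C.G : Set H) C.𝒜 y p} := by
      refine ⟨⟨ustar (C.G : Set H) C.𝒜 u p, u, huI, rfl⟩, ?_, ?_⟩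
      · rintro m ⟨y, hy, rfl⟩
        exact aux_ustar_ultra hTA hAA hDA (hIu y hy) (hIu p hp)
      · rintro s hs m ⟨y, hy, rfl⟩
        exact ⟨ustar (C.G : Set H) C.𝒜 s y, hILI.2.2 s hs y hy,
          (aux_ustar_assoc hTA hAA hDA hs (hIu y hy) (hIu p hp)).symm⟩
    have hsub' : {m | ∃ y ∈ I, m = ustar (C.G : Set H) C.𝒜 y p} ⊆ I := by
      rintro m ⟨y, hy, rfl⟩
      exact hILI.2.2 y (hIu y hy) p hp
    have heq := hI.2 _ hsub' hLI'
    have humem : u ∈ {m | ∃ y ∈ I, m = ustar (C.G : Set H) C.𝒜 y p} := by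
      rw [heq]; exact huI
    obtain ⟨q, hq, hqp⟩ := humem
    exact ⟨q, hq, hqp.symm⟩
  -- Two-sided inverses.
  have hpair : ∀ p ∈ I, ∃ q ∈ I, ustar (C.G : Set H) C.𝒜 p q = u ∧
      ustar (C.G : Set H) C.𝒜 q p = u := by
    intro p hp
    obtain ⟨q, hqI, hqp⟩ := hqex p hp
    have hpq : ustar (C.G : Set H) C.𝒜 p q ∈ I := hILI.2.2 p (hIu p hp) q hqI
    have hap : ustar (C.G : Set H) C.𝒜 (ustar (C.G : Set H) C.𝒜 p q) p = p := by
      rw [aux_ustar_assoc hTA hAA hDA (hIu p hp) (hIu q hqI) (hIu p hp), hqp]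
      exact hright p hp
    have hpqid : ustar (C.G : Set H) C.𝒜 (ustar (C.G : Set H) C.𝒜 p q)
        (ustar (C.G : Set H) C.𝒜 p q) = ustar (C.G : Set H) C.𝒜 p q := by
      rw [← aux_ustar_assoc hTA hAA hDA (hIu _ hpq) (hIu p hp) (hIu q hqI), hap]
    exact ⟨q, hqI, huniq _ hpq hpqid, hqp⟩
  -- Left identity for u.
  have hleft : ∀ p ∈ I, ustar (C.G : Set H) C.𝒜 u p = p := by
    intro p hp
    obtain ⟨q, hqI, hpqu, hqp⟩ := hpair p hp
    rw [← hpqu, aux_ustar_assoc hTA hAA hDA (hIu p hp) (hIu q hqI) (hIu p hp), hqp]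
    exact hright p hp
  exact ⟨fun p hp q hq => hILI.2.2 p (hIu p hp) q hq, u, huI,
    fun p hp => ⟨hleft p hp, hright p hp⟩, hpair⟩
end
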